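/- Let A be a commutative Z_(p)-algebra, n ≥ 1. The ghost-component ring homomorphism Φ_{n+1}: W_{n+1}(A/p^n A) → A/p^n A, (x_1,...,x_{n+1}) ↦ x_1^{p^n} + p x_2^{p^{n-1}} + ... + p^n x_{n+1}, vanishes on V^n(A/p^n A) and on W_n(pA/p^n A), and thus factors through a ring homomorphism θ_n: W_n(A/pA) → A/p^n A given by (x_1,...,x_n) ↦ x̃_1^{p^n} + p x̃_2^{p^{n-1}} + ... + p^{n-1} x̃_n^p for any lifts x̃_i. -/

import Mathlib

open Function WittVector Finset

private lemma st7_iterate_versch_coeff_lt {p : ℕ} [Fact p.Prime] {R : Type*} [CommRing R]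
    (x : WittVector p R) (n i : ℕ) (hi : i < n) :
    ((WittVector.verschiebung)^[n] x).coeff i = 0 := by
  induction n generalizing i with
  | zero => omega
  | succ m ih =>
    rw [Function.iterate_succ_apply']
    cases i with
    | zero => exact verschiebung_coeff_zero _
    | succ j => rw [verschiebung_coeff_succ]; exact ih j (by omega)

private lemma st7_mk_pow_eq_zero {A : Type*} [CommRing A] (p : A) (n m : ℕ) (h : n ≤ m) :
    (Ideal.Quotient.mk (Ideal.span {p ^ n}) p) ^ m = 0 := by
  rw [← map_pow, Ideal.Quotient.eq_zero_iff_mem]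
  exact Ideal.mem_span_singleton.2 (pow_dvd_pow p h)

theorem statement7 (p : ℕ) [hp : Fact p.Prime] (n : ℕ) (hn : 1 ≤ n)
    (A : Type*) [CommRing A]
    -- `A` is a `ℤ_(p)`-algebra
    (hZp : ∀ q : ℕ, q.Prime → q ≠ p → IsUnit (q : A)) :
    -- `Φ_{n+1}` vanishes on `Vⁿ(A/pⁿA)` ...
    (∀ x : WittVector p (A ⧸ Ideal.span {(p : A) ^ n}),
      WittVector.ghostComponent n ((WittVector.verschiebung)^[n] x) = 0) ∧
    -- ... and on `W_n(pA/pⁿA)` ...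
    (∀ x : WittVector p (A ⧸ Ideal.span {(p : A) ^ n}),
      (∀ i : ℕ, i < n →
        x.coeff i ∈ Ideal.span {Ideal.Quotient.mk (Ideal.span {(p : A) ^ n}) (p : A)}) →
      WittVector.ghostComponent n x = 0) ∧
    -- ... and thus factors through a unique ring homomorphism `θ_n : W_n(A/pA) → A/pⁿA`,
    -- given on coordinates by the formula with lifts.
    (∃! θ : TruncatedWittVector p n (A ⧸ Ideal.span {(p : A)}) →+* A ⧸ Ideal.span {(p : A) ^ n},
      (∀ x : WittVector p (A ⧸ Ideal.span {(p : A) ^ n}),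
        θ (WittVector.truncate n (WittVector.map
            (Ideal.Quotient.factor
              (Ideal.span_singleton_le_span_singleton.2 (dvd_pow_self (p : A) (by omega)))) x))
          = WittVector.ghostComponent n x) ∧
      (∀ c : Fin n → A,
        θ (TruncatedWittVector.mk p fun i => Ideal.Quotient.mk (Ideal.span {(p : A)}) (c i))
          = Ideal.Quotient.mk (Ideal.span {(p : A) ^ n})
              (∑ i : Fin n, (p : A) ^ (i : ℕ) * (c i) ^ p ^ (n - (i : ℕ))))) := by
  set I : Ideal A := Ideal.span {(p : A) ^ n} with hI
  set J : Ideal A := Ideal.span {(p : A)} with hJ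
  have hpQ : ((p : ℕ) : A ⧸ I) = Ideal.Quotient.mk I (p : A) := by
    simp
  -- part 2 (proved first, reused)
  have part2 : ∀ x : WittVector p (A ⧸ I),
      (∀ i : ℕ, i < n → x.coeff i ∈ Ideal.span {Ideal.Quotient.mk I (p : A)}) →
      WittVector.ghostComponent n x = 0 := by
    intro x hx
    rw [ghostComponent_apply, aeval_wittPolynomial]
    refine Finset.sum_eq_zero fun i hi => ?_
    rw [Finset.mem_range] at hi
    rcases eq_or_lt_of_le (Nat.lt_succ_iff.mp hi) with h | h
    · subst h
      rw [hpQ, st7_mk_pow_eq_zero (p : A) i i le_rfl, zero_mul]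
    · obtain ⟨a, ha⟩ := Ideal.mem_span_singleton'.1 (hx i h)
      have he : n - i ≤ p ^ (n - i) := (Nat.lt_pow_self hp.out.one_lt).le
      calc ((p : ℕ) : A ⧸ I) ^ i * x.coeff i ^ p ^ (n - i)
          = a ^ p ^ (n - i) *
            ((Ideal.Quotient.mk I (p : A)) ^ (i + p ^ (n - i))) := by
            rw [← ha, hpQ, mul_pow, pow_add]; ring
        _ = 0 := by rw [st7_mk_pow_eq_zero (p : A) n _ (by omega), mul_zero]
  refine ⟨?_, part2, ?_⟩
  · -- part 1
    intro x
    rw [ghostComponent_apply, aeval_wittPolynomial]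
    refine Finset.sum_eq_zero fun i hi => ?_
    rw [Finset.mem_range] at hi
    rcases eq_or_lt_of_le (Nat.lt_succ_iff.mp hi) with h | h
    · subst h
      rw [hpQ, st7_mk_pow_eq_zero (p : A) i i le_rfl, zero_mul]
    · rw [st7_iterate_versch_coeff_lt x n i h,
        zero_pow (pow_ne_zero _ hp.out.ne_zero), mul_zero]
  · -- part 3
    have hIJ : I ≤ J :=
      Ideal.span_singleton_le_span_singleton.2 (dvd_pow_self (p : A) (by omega))
    set π : A ⧸ I →+* A ⧸ J := Ideal.Quotient.factor hIJ with hπ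
    set f : WittVector p (A ⧸ I) →+* TruncatedWittVector p n (A ⧸ J) :=
      (WittVector.truncate n).comp (WittVector.map π) with hf
    have hfsurj : Function.Surjective f := by
      have hπs : Function.Surjective π := by
        intro y
        obtain ⟨a, rfl⟩ := Ideal.Quotient.mk_surjective y
        exact ⟨Ideal.Quotient.mk I a, Ideal.Quotient.factor_mk _ _⟩
      rw [hf, RingHom.coe_comp]
      exact Function.Surjective.comp (WittVector.truncate_surjective (p := p) n _) (WittVector.map_surjective _ hπs)
    have hker : RingHom.ker f ≤ RingHom.ker (WittVector.ghostComponent (p := p) n) := by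
      intro x hx
      rw [RingHom.mem_ker] at hx ⊢
      refine part2 x fun i hi => ?_
      have hcoeff : π (x.coeff i) = 0 := by
        have := congrArg (fun t => TruncatedWittVector.coeff ⟨i, hi⟩ t) hx
        simpa [hf, WittVector.coeff_truncate, WittVector.map_coeff] using this
      obtain ⟨a, ha⟩ := Ideal.Quotient.mk_surjective (x.coeff i)
      rw [← ha, hπ, Ideal.Quotient.factor_mk, Ideal.Quotient.eq_zero_iff_mem] at hcoeff
      obtain ⟨c, hc⟩ := Ideal.mem_span_singleton'.1 hcoeff
      refine Ideal.mem_span_singleton'.2 ⟨Ideal.Quotient.mk I c, ?_⟩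
      rw [← map_mul, hc, ha]
    set θ : TruncatedWittVector p n (A ⧸ J) →+* A ⧸ I :=
      f.liftOfRightInverse (Function.surjInv hfsurj)
        (Function.rightInverse_surjInv hfsurj) ⟨WittVector.ghostComponent n, hker⟩ with hθ
    have hθf : ∀ x, θ (f x) = WittVector.ghostComponent n x := fun x =>
      f.liftOfRightInverse_comp_apply _ _ ⟨WittVector.ghostComponent n, hker⟩ x
    refine ⟨θ, ⟨fun x => hθf x, ?_⟩, ?_⟩
    · -- the coordinate formula
      intro c
      set x : WittVector p (A ⧸ I) :=
        WittVector.mk p (fun i => if h : i < n then Ideal.Quotient.mk I (c ⟨i, h⟩) else 0)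
        with hx
      have hfx : f x = TruncatedWittVector.mk p
          (fun i => Ideal.Quotient.mk J (c i)) := by
        ext i
        simp only [hf, RingHom.comp_apply, WittVector.coeff_truncate, WittVector.map_coeff,
          TruncatedWittVector.coeff_mk, hx, WittVector.coeff_mk, i.isLt, dif_pos, Fin.eta,
          hπ, Ideal.Quotient.factor_mk]
      rw [← hfx, hθf, ghostComponent_apply, aeval_wittPolynomial]
      rw [Finset.sum_range_succ]
      have hlast : ((p : ℕ) : A ⧸ I) ^ n * x.coeff n ^ p ^ (n - n) = 0 := by
        rw [hx, WittVector.coeff_mk, dif_neg (lt_irrefl n), Nat.sub_self, pow_zero, pow_one,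
          mul_zero]
      rw [hlast, add_zero, map_sum, ← Fin.sum_univ_eq_sum_range
        (fun i => ((p : ℕ) : A ⧸ I) ^ i * x.coeff i ^ p ^ (n - i)) n]
      refine Finset.sum_congr rfl fun i _ => ?_
      rw [hx, WittVector.coeff_mk, dif_pos i.isLt, Fin.eta, map_mul, map_pow, map_pow, hpQ]
    · -- uniqueness
      intro θ' ⟨h1, _⟩
      refine RingHom.ext fun t => ?_
      obtain ⟨x, rfl⟩ := hfsurj t
      rw [hθf]
      exact h1 x
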